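/- Given a unit interval poset P = ([n], ⪯_S) with starting set S chosen so that S ∩ (S+1) = ∅, the word w of length 2n defined by listing S ∪ (S+1) in increasing order and recording a north step for elements of S and an east step for elements of S+1 is a Dyck path: every prefix contains at least as many north steps as east steps, and w has exactly n north steps and n east steps. -/

import Mathlib

/-- **The word `φ(P)` is a Dyck path.** Given a starting set
`S = {x_1 < ⋯ < x_n}` with `S ∩ (S+1) = ∅`, list `S ∪ (S+1)` in increasing
order as `L`, and let `w` record `true` (north) for elements of `S` and
`false` (east) for elements of `S+1`. Then every prefix of `w` has at least as
many norths as easts, and `w` has exactly `n` norths and `n` easts. -/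
theorem phi_word_isDyck (n : ℕ) (x : Fin n → ℝ) (hx : StrictMono x)
    (hdisj : ∀ i j : Fin n, x i + 1 ≠ x j)
    (L : List ℝ) (hsort : L.Pairwise (· < ·))
    (hperm : L.Perm (List.ofFn x ++ List.ofFn (fun i => x i + 1)))
    (w : List Bool) (hlen : w.length = L.length)
    (hw : ∀ k < L.length, (w.getD k false = true ↔ ∃ i : Fin n, x i = L.getD k 0)) :
    (∀ p : List Bool, p <+: w → p.count false ≤ p.count true) ∧
      w.count true = n ∧ w.count false = n := by
  classical
  set b : ℝ → Bool := fun r => decide (∃ i, x i = r) with hb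
  have hbtrue : ∀ r, b r = true ↔ ∃ i, x i = r := by
    intro r; simp [hb]
  have hbfalse : ∀ r, (!b r) = true ↔ ¬ ∃ i, x i = r := by
    intro r; simp [hb]
  have hLnd : L.Nodup := hsort.nodup
  have hxnd : (List.ofFn x).Nodup := List.nodup_ofFn.mpr hx.injective
  have hx'nd : (List.ofFn fun i => x i + 1).Nodup := by
    refine List.nodup_ofFn.mpr ?_
    intro i j h
    exact hx.injective (by dsimp at h; linarith)
  have hxmem : ∀ i, x i ∈ L := by
    intro i
    rw [hperm.mem_iff, List.mem_append]
    exact Or.inl (by simp [List.mem_ofFn])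
  have hmemL : ∀ r ∈ L, (∃ i, x i = r) ∨ (∃ i, x i + 1 = r) := by
    intro r hr
    have := hperm.mem_iff.mp hr
    simp only [List.mem_append, List.mem_ofFn, Set.mem_range] at this
    exact this
  -- w is the pointwise image of L under b
  have hwmap : w = L.map b := by
    apply List.ext_getElem (by simp [hlen])
    intro k hk hk'
    have hkL : k < L.length := by simpa using hk'
    have h1 := hw k hkL
    rw [List.getD_eq_getElem _ _ hk, List.getD_eq_getElem _ _ hkL] at h1
    simp only [List.getElem_map]
    rw [Bool.eq_iff_iff, h1, hbtrue]
  have hcount : ∀ (q : Bool) (T : List ℝ),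
      (T.map b).count q = T.countP (fun r => b r == q) := by
    intro q T
    rw [List.count_eq_countP, List.countP_map]; rfl
  -- counting over the whole list
  have hctrue : ∀ (T : List ℝ), T.countP (fun r => b r == true) = T.countP b := by
    intro T; congr 1; funext r; cases b r <;> simp
  have hcfalse : ∀ (T : List ℝ), T.countP (fun r => b r == false) = T.countP (fun r => !b r) := by
    intro T; congr 1; funext r; cases b r <;> simp
  -- total counts
  have hcxb : (List.ofFn x).countP b = n := by
    have h := List.countP_eq_length (p := b) (l := List.ofFn x)
    rw [h.mpr ?_, List.length_ofFn]
    intro r hr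
    rw [List.mem_ofFn] at hr
    obtain ⟨i, hi⟩ := hr
    exact (hbtrue r).mpr ⟨i, hi⟩
  have hcx'b : (List.ofFn fun i => x i + 1).countP b = 0 := by
    refine List.countP_eq_zero.mpr ?_
    intro r hr
    rw [List.mem_ofFn] at hr
    obtain ⟨i, hi⟩ := hr
    rw [hbtrue]
    rintro ⟨j, hj⟩
    exact hdisj i j (by simpa using hi.trans hj.symm)
  have hcxnb : (List.ofFn x).countP (fun r => !b r) = 0 := by
    refine List.countP_eq_zero.mpr ?_
    intro r hr
    rw [List.mem_ofFn] at hr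
    obtain ⟨i, hi⟩ := hr
    rw [hbfalse]
    exact fun h => h ⟨i, hi⟩
  have hcx'nb : (List.ofFn fun i => x i + 1).countP (fun r => !b r) = n := by
    have h := List.countP_eq_length (p := fun r => !b r) (l := List.ofFn fun i => x i + 1)
    rw [h.mpr ?_, List.length_ofFn]
    intro r hr
    rw [List.mem_ofFn] at hr
    obtain ⟨i, hi⟩ := hr
    rw [hbfalse]
    rintro ⟨j, hj⟩
    exact hdisj i j (by simpa using hi.trans hj.symm)
  have hwt : w.count true = n := by
    rw [hwmap, hcount, hctrue, hperm.countP_eq, List.countP_append, hcxb, hcx'b]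
    omega
  have hwf : w.count false = n := by
    rw [hwmap, hcount, hcfalse, hperm.countP_eq, List.countP_append, hcxnb, hcx'nb]
    omega
  refine ⟨?_, hwt, hwf⟩
  -- the prefix property
  intro p hp
  obtain ⟨k, hk⟩ : ∃ k, p = (L.take k).map b := by
    refine ⟨p.length, ?_⟩
    rw [List.map_take, ← hwmap]
    exact List.prefix_iff_eq_take.mp hp
  subst hk
  set T := L.take k with hT
  have hTnd : T.Nodup := (List.take_sublist k L).nodup hLnd
  -- lower-set property of T
  have hlow : ∀ r s : ℝ, r ∈ L → s ∈ T → r < s → r ∈ T := by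
    intro r s hr hs hrs
    obtain ⟨j, hj, hjr⟩ := List.getElem_of_mem hr
    obtain ⟨m, hm, hms⟩ := List.mem_take_iff_getElem.mp hs
    have hmL : m < L.length := lt_of_lt_of_le hm (min_le_right _ _)
    have hjm : j < m := by
      by_contra hcon
      push_neg at hcon
      rcases lt_or_eq_of_le hcon with h | h
      · have := (List.sortedLT_iff_pairwise.mpr hsort).strictMono_get (show (⟨m, hmL⟩ : Fin L.length) < ⟨j, hj⟩ from h)
        simp only [List.get_eq_getElem] at this
        rw [hjr, hms] at this
        linarith
      · subst h
        have hrseq : r = s := by rw [← hjr, ← hms]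
        rw [hrseq] at hrs
        exact lt_irrefl _ hrs
    refine List.mem_take_iff_getElem.mpr ⟨j, ?_, hjr⟩
    exact lt_min (lt_of_lt_of_le (hjm.trans_le hm.le) (min_le_left _ _)) hj
  have hTsubL : ∀ r ∈ T, r ∈ L := fun r hr => List.mem_of_mem_take hr
  -- count of norths in T = number of i with x i ∈ T
  have keyN : T.countP b = (List.ofFn x).countP (fun r => decide (r ∈ T)) := by
    rw [List.countP_eq_length_filter, List.countP_eq_length_filter]
    refine (List.perm_of_nodup_nodup_toFinset_eq (hTnd.filter _) (hxnd.filter _) ?_).length_eq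
    ext r
    simp only [List.mem_toFinset, List.mem_filter, List.mem_ofFn, Set.mem_range,
      decide_eq_true_eq, hbtrue]
    tauto
  -- count of easts in T = number of i with x i + 1 ∈ T
  have keyE : T.countP (fun r => !b r)
      = (List.ofFn x).countP (fun r => decide (r + 1 ∈ T)) := by
    have h1 : (List.ofFn x).countP (fun r => decide (r + 1 ∈ T))
        = (List.ofFn fun i => x i + 1).countP (fun r => decide (r ∈ T)) := by
      have h2 : (List.ofFn fun i => x i + 1) = (List.ofFn x).map (· + 1) := by
        simp [List.map_ofFn, Function.comp_def]
      rw [h2, List.countP_map]; rfl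
    rw [h1, List.countP_eq_length_filter, List.countP_eq_length_filter]
    refine (List.perm_of_nodup_nodup_toFinset_eq (hTnd.filter _) (hx'nd.filter _) ?_).length_eq
    ext r
    simp only [List.mem_toFinset, List.mem_filter, List.mem_ofFn, Set.mem_range,
      decide_eq_true_eq, hbfalse]
    constructor
    · rintro ⟨hrT, hns⟩
      rcases hmemL r (hTsubL r hrT) with h | h
      · exact absurd h hns
      · exact ⟨h, hrT⟩
    · rintro ⟨⟨i, hi⟩, hrT⟩
      refine ⟨hrT, ?_⟩
      rintro ⟨j, hj⟩
      exact hdisj i j (by rw [hi, hj])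
  -- compare
  rw [hcount, hcount, hctrue, hcfalse, keyN, keyE]
  refine List.countP_mono_left ?_
  intro r hr h1
  rw [List.mem_ofFn] at hr
  obtain ⟨i, hi⟩ := hr
  rw [decide_eq_true_eq] at h1 ⊢
  exact hlow r (r + 1) (hi ▸ hxmem i) h1 (by linarith)
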